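/- Let E be a topological vector space over a non-discrete topological field K, and let U ⊆ E be a subset whose interior U⁰ is dense in U. If W ⊆ U is dense in U and open in E, then the set W^{]1[} := {(x,y,t) ∈ W × E × Kˣ : x + t·y ∈ W} is open in E × E × K and dense in U^{[1]} := {(x,y,t) ∈ U × E × K : x + t·y ∈ U}. -/

import Mathlib

open Topology Filter


/-- For `U ⊆ E` with dense interior and `W ⊆ U` dense in `U` and open in `E`,
the set `W^{]1[}` is open in `E × E × K` and dense in `U^{[1]}`. -/
theorem stmt0 {K E : Type*} [Field K] [TopologicalSpace K] [IsTopologicalRing K] [T2Space K]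
    [AddCommGroup E] [Module K E] [TopologicalSpace E] [IsTopologicalAddGroup E]
    [ContinuousSMul K E] [T2Space E]
    (hK : (nhdsWithin (0 : K) {t : K | t ≠ 0}).NeBot)
    (U W : Set E) (hUdense : U ⊆ closure (interior U))
    (hWU : W ⊆ U) (hWopen : IsOpen W) (hWdense : U ⊆ closure W) :
    IsOpen {p : E × E × K | p.1 ∈ W ∧ p.2.2 ≠ 0 ∧ p.1 + p.2.2 • p.2.1 ∈ W} ∧
    {p : E × E × K | p.1 ∈ U ∧ p.1 + p.2.2 • p.2.1 ∈ U} ⊆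
      closure {p : E × E × K | p.1 ∈ W ∧ p.2.2 ≠ 0 ∧ p.1 + p.2.2 • p.2.1 ∈ W} := by
  set S : Set (E × E × K) := {p : E × E × K | p.1 ∈ W ∧ p.2.2 ≠ 0 ∧ p.1 + p.2.2 • p.2.1 ∈ W}
    with hS
  have hcont : Continuous fun p : E × E × K => p.1 + p.2.2 • p.2.1 :=
    continuous_fst.add ((continuous_snd.comp continuous_snd).smul
      (continuous_fst.comp continuous_snd))
  have hopen : IsOpen S := by
    have h1 : IsOpen {p : E × E × K | p.1 ∈ W} := hWopen.preimage continuous_fst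
    have h2 : IsOpen {p : E × E × K | p.2.2 ≠ 0} :=
      isOpen_compl_singleton.preimage (continuous_snd.comp continuous_snd)
    have h3 : IsOpen {p : E × E × K | p.1 + p.2.2 • p.2.1 ∈ W} := hWopen.preimage hcont
    exact h1.inter (h2.inter h3)
  refine ⟨hopen, ?_⟩
  rintro ⟨x, y, t⟩ ⟨hxU, hzU⟩
  rcases eq_or_ne t 0 with rfl | ht
  · -- t = 0 : first approximate within W, then use small nonzero scalars
    have key : ∀ a ∈ W, ((a, y, (0:K)) : E × E × K) ∈ closure S := by
      intro a ha
      rw [mem_closure_iff_clusterPt]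
      have hmap : Filter.Tendsto (fun s : K => ((a, y, s) : E × E × K))
          (nhdsWithin (0 : K) {t : K | t ≠ 0}) (𝓝 (a, y, 0)) :=
        Filter.Tendsto.mono_left (Continuous.tendsto (continuous_const.prodMk (continuous_const.prodMk continuous_id)) 0) nhdsWithin_le_nhds
      have hev : ∀ᶠ s in nhdsWithin (0 : K) {t : K | t ≠ 0},
          ((a, y, s) : E × E × K) ∈ S := by
        have h1 : ∀ᶠ s in nhdsWithin (0 : K) {t : K | t ≠ 0}, s ≠ 0 :=
          eventually_mem_nhdsWithin
        have h2 : ∀ᶠ s in 𝓝 (0 : K), a + s • y ∈ W := by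
          have : Continuous fun s : K => a + s • y := continuous_const.add (continuous_id.smul continuous_const)
          have := this.tendsto 0
          simp only [zero_smul, add_zero] at this
          exact this (hWopen.mem_nhds ha)
        filter_upwards [h1, h2.filter_mono nhdsWithin_le_nhds] with s hs1 hs2
        exact ⟨ha, hs1, hs2⟩
      exact Filter.NeBot.mono (hK.map _) (le_inf hmap (Filter.le_principal_iff.mpr
        (Filter.mem_map.mpr hev)))
    have hx : x ∈ closure W := hWdense hxU
    have hφ : Continuous fun a : E => ((a, y, (0:K)) : E × E × K) := continuous_id.prodMk continuous_const
    have : ((x, y, (0:K)) : E × E × K) ∈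
        closure ((fun a : E => ((a, y, (0:K)) : E × E × K)) '' W) :=
      (image_closure_subset_closure_image hφ) ⟨x, hx, rfl⟩
    refine closure_minimal ?_ isClosed_closure this
    rintro _ ⟨a, ha, rfl⟩
    exact key a ha
  · -- t ≠ 0
    rw [mem_closure_iff_clusterPt]
    set z := x + t • y with hz
    have hxW : x ∈ closure W := hWdense hxU
    have hzW : z ∈ closure W := hWdense hzU
    have hnb1 : (𝓝 x ⊓ Filter.principal W).NeBot := mem_closure_iff_clusterPt.mp hxW
    have hnb2 : (𝓝 z ⊓ Filter.principal W).NeBot := mem_closure_iff_clusterPt.mp hzW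
    set f : E × E → E × E × K := fun p => (p.1, t⁻¹ • (p.2 - p.1), t) with hf
    have hfc : Continuous f := by
      apply continuous_fst.prodMk
      exact (continuous_const.smul (continuous_snd.sub continuous_fst)).prodMk
        continuous_const
    have hle1 : ((𝓝 x ⊓ Filter.principal W) ×ˢ (𝓝 z ⊓ Filter.principal W)).map f ≤
        𝓝 (x, y, t) := by
      have h1 : (𝓝 x ⊓ Filter.principal W) ×ˢ (𝓝 z ⊓ Filter.principal W) ≤ 𝓝 (x, z) := by
        rw [nhds_prod_eq]
        exact Filter.prod_mono inf_le_left inf_le_left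
      have h2 : f (x, z) = (x, y, t) := by
        simp only [hf, hz]
        rw [add_sub_cancel_left, smul_smul, inv_mul_cancel₀ ht, one_smul]
      calc ((𝓝 x ⊓ Filter.principal W) ×ˢ (𝓝 z ⊓ Filter.principal W)).map f
          ≤ (𝓝 (x, z)).map f := Filter.map_mono h1
        _ ≤ 𝓝 (f (x, z)) := hfc.tendsto (x, z)
        _ = 𝓝 (x, y, t) := by rw [h2]
    have hle2 : ((𝓝 x ⊓ Filter.principal W) ×ˢ (𝓝 z ⊓ Filter.principal W)).map f ≤
        Filter.principal S := by
      rw [Filter.le_principal_iff, Filter.mem_map]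
      have h1 : ∀ᶠ p in (𝓝 x ⊓ Filter.principal W) ×ˢ (𝓝 z ⊓ Filter.principal W),
          p.1 ∈ W ∧ p.2 ∈ W := by
        apply Filter.Eventually.and
        · exact Filter.Eventually.prod_inl (Filter.eventually_inf_principal.mpr (Filter.Eventually.of_forall fun _ h => h)) _
        · exact Filter.Eventually.prod_inr (Filter.eventually_inf_principal.mpr (Filter.Eventually.of_forall fun _ h => h)) _
      filter_upwards [h1] with p hp
      refine ⟨hp.1, ht, ?_⟩
      show p.1 + t • (t⁻¹ • (p.2 - p.1)) ∈ W
      rw [smul_inv_smul₀ ht, add_sub_cancel]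
      exact hp.2
    exact Filter.NeBot.mono ((hnb1.prod hnb2).map f) (le_inf hle1 hle2)
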